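/- Let p be a strictly positive joint probability mass function of random variables (X_1, …, X_d, Y) on finite types, fix i ∈ {1,…,d}, a subset S ⊆ {1,…,d} with i ∈ S, and ε ≥ 0 satisfying: for every U ⊆ S \ {i} and every V ⊆ {1,…,d} \ S, both I_a(X_i; X_V | X_U, Y) ≤ ε and I_a(X_i; X_V | X_U) ≤ ε. Then the expected error admits the bound E_X | φ̂^S_X(i) − φ_X(i) | ≤ (1/d) ∑_{U ⊆ S, i ∈ U} ∑_{A ⊆ {1,…,d}, A ∩ S = U} [ I_a(X_i; X_{A\S} | X_{U\{i}}, Y) + I_a(X_i; X_{A\S} | X_{U\{i}}) ] / ((d−1) choose (|A|−1)). -/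

import Mathlib

open scoped Classical BigOperators

variable {d : ℕ} {𝒳 : Fin d → Type*} [∀ j, Fintype (𝒳 j)] {𝒴 : Type*} [Fintype 𝒴]

/-- The joint marginal probability `p(x_S, y)` of `(X_S, Y)` at the restriction of `x` to `S`. -/
noncomputable def margXY (p : (∀ j, 𝒳 j) → 𝒴 → ℝ) (S : Finset (Fin d))
    (x : ∀ j, 𝒳 j) (y : 𝒴) : ℝ :=
  ∑ x' : ∀ j, 𝒳 j, if ∀ j ∈ S, x' j = x j then p x' y else 0

/-- The marginal probability `p(x_S)` of `X_S` at the restriction of `x` to `S`. -/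
noncomputable def margX (p : (∀ j, 𝒳 j) → 𝒴 → ℝ) (S : Finset (Fin d))
    (x : ∀ j, 𝒳 j) : ℝ :=
  ∑ y, margXY p S x y

/-- The marginal probability `p(x)` of the full feature vector `X`. -/
noncomputable def pX (p : (∀ j, 𝒳 j) → 𝒴 → ℝ) (x : ∀ j, 𝒳 j) : ℝ :=
  ∑ y, p x y

/-- The conditional probability `p(y | x_S) = p(y, x_S) / p(x_S)`
(for `S = ∅` this is `p(y)` when `p` sums to one). -/
noncomputable def condY (p : (∀ j, 𝒳 j) → 𝒴 → ℝ) (S : Finset (Fin d))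
    (x : ∀ j, 𝒳 j) (y : 𝒴) : ℝ :=
  margXY p S x y / margX p S x

/-- The importance score `v_x(S) = ∑_y p(y | x) log p(y | x_S)`. -/
noncomputable def impScore (p : (∀ j, 𝒳 j) → 𝒴 → ℝ) (x : ∀ j, 𝒳 j)
    (S : Finset (Fin d)) : ℝ :=
  ∑ y, condY p Finset.univ x y * Real.log (condY p S x y)

/-- The marginal contribution `m_x(S, i) = v_x(S) − v_x(S \ {i})`. -/
noncomputable def margContrib (p : (∀ j, 𝒳 j) → 𝒴 → ℝ) (x : ∀ j, 𝒳 j)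
    (S : Finset (Fin d)) (i : Fin d) : ℝ :=
  impScore p x S - impScore p x (S.erase i)

/-- The Shapley value `φ_x(i)`. -/
noncomputable def shapley (p : (∀ j, 𝒳 j) → 𝒴 → ℝ) (x : ∀ j, 𝒳 j) (i : Fin d) : ℝ :=
  (1 / (d : ℝ)) * ∑ A : Finset (Fin d),
    if i ∈ A then margContrib p x A i / ((d - 1).choose (A.card - 1) : ℝ) else 0

/-- The restricted Shapley estimate `φ̂^S_x(i)` over a feature subset `S` containing `i`. -/
noncomputable def shapleyRes (p : (∀ j, 𝒳 j) → 𝒴 → ℝ) (x : ∀ j, 𝒳 j)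
    (S : Finset (Fin d)) (i : Fin d) : ℝ :=
  (1 / (S.card : ℝ)) * ∑ T ∈ S.powerset,
    if i ∈ T then margContrib p x T i / ((S.card - 1).choose (T.card - 1) : ℝ) else 0

/-- The absolute conditional mutual information `I_a(X_A; X_B | X_C)`. -/
noncomputable def IaX (p : (∀ j, 𝒳 j) → 𝒴 → ℝ) (A B C : Finset (Fin d)) : ℝ :=
  ∑ x : ∀ j, 𝒳 j, pX p x *
    |Real.log ((margX p (A ∪ B ∪ C) x * margX p C x) /
      (margX p (A ∪ C) x * margX p (B ∪ C) x))|

/-- The absolute conditional mutual information `I_a(X_A; X_B | X_C, Y)`. -/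
noncomputable def IaXY (p : (∀ j, 𝒳 j) → 𝒴 → ℝ) (A B C : Finset (Fin d)) : ℝ :=
  ∑ x : ∀ j, 𝒳 j, ∑ y, p x y *
    |Real.log ((margXY p (A ∪ B ∪ C) x y * margXY p C x y) /
      (margXY p (A ∪ C) x y * margXY p (B ∪ C) x y))|

section Comb
open Finset Nat

/-- upper-index Vandermonde / hockey-stick convolution -/
lemma hockey (r : ℕ) : ∀ t n : ℕ, ∑ b ∈ range (n+1), (b+r).choose r * (n-b+t).choose t
    = (n+r+t+1).choose (r+t+1) := by
  intro t
  induction t with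
  | zero =>
    intro n
    simp only [Nat.add_zero, Nat.choose_zero_right, mul_one]
    have : ∑ b ∈ range (n+1), (b+r).choose r = ∑ m ∈ Icc r (n+r), m.choose r := by
      rw [← Finset.Ico_add_one_right_eq_Icc, Finset.sum_Ico_eq_sum_range]
      apply Finset.sum_congr
      · congr 1; omega
      · intro b _; rw [add_comm r b]
    rw [this, Nat.sum_Icc_choose]
  | succ t ih =>
    intro n
    induction n with
    | zero => simp
    | succ n ihn =>
      rw [Finset.sum_range_succ]
      have key : ∀ b ∈ range (n+1), (b+r).choose r * (n+1-b+(t+1)).choose (t+1)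
          = (b+r).choose r * (n-b+(t+1)).choose (t+1) + (b+r).choose r * (n+1-b+t).choose t := by
        intro b hb
        simp only [mem_range] at hb
        have h1 : n+1-b+(t+1) = (n-b+(t+1)) + 1 := by omega
        have h2 : n+1-b+t = n-b+(t+1) := by omega
        rw [h1, Nat.choose_succ_succ, Nat.mul_add, h2, add_comm ((b+r).choose r * (n-b+(t+1)).choose t)]
      rw [Finset.sum_congr rfl key, Finset.sum_add_distrib, ihn]
      have e2 : ∑ b ∈ range (n+1), (b+r).choose r * (n+1-b+t).choose t
          = (∑ b ∈ range (n+2), (b+r).choose r * (n+1-b+t).choose t)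
            - (n+1+r).choose r := by
        rw [Finset.sum_range_succ (n := n+1)]
        have : n+1-(n+1)+t = t := by omega
        rw [this, Nat.choose_self, Nat.mul_one, Nat.add_sub_cancel]
      have hle : (n+1+r).choose r ≤ ∑ b ∈ range (n+2), (b+r).choose r * (n+1-b+t).choose t := by
        rw [Finset.sum_range_succ (n := n+1)]
        have : n+1-(n+1)+t = t := by omega
        rw [this, Nat.choose_self, Nat.mul_one]
        exact Nat.le_add_left _ _
      rw [e2, ih (n+1)]
      have h1 : n+1-(n+1)+(t+1) = t+1 := by omega
      rw [h1, Nat.choose_self, Nat.mul_one]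
      have h2 : (n+1+r).choose r ≤ (n+1+r+t+1).choose (r+t+1) := by
        calc (n+1+r).choose r ≤ ∑ b ∈ range (n+2), (b+r).choose r * (n+1-b+t).choose t := hle
        _ = (n+1+r+t+1).choose (r+t+1) := ih (n+1)
      have hp := Nat.choose_succ_succ' (n+r+t+2) (r+t+1)
      have hA : (n + r + (t + 1) + 1).choose (r + (t + 1) + 1) = (n+r+t+2).choose (r+t+1+1) := by
        congr 1 <;> omega
      have hB : (n + 1 + r + t + 1).choose (r + t + 1) = (n+r+t+2).choose (r+t+1) := by
        congr 1; omega
      have hC : (n + 1 + r + (t + 1) + 1).choose (r + (t + 1) + 1) = (n+r+t+2+1).choose (r+t+1+1) := by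
        congr 1 <;> omega
      omega

lemma term_id {a c e b : ℕ} (hb : b ≤ e) :
    ((e.choose b : ℝ)) * ((a+c+e).choose (a+c)) * ((a+c).choose a)
      = ((a+b).choose a) * ((c+e-b).choose c) * ((a+c+e).choose (a+b)) := by
  have h1 : (e.choose b : ℝ) = e ! / (b ! * (e-b)!) := Nat.cast_choose ℝ hb
  have h2 : (((a+c+e).choose (a+c) : ℕ) : ℝ) = (a+c+e)! / ((a+c)! * e !) := by
    rw [Nat.cast_choose ℝ (by omega : a+c ≤ a+c+e), show a+c+e-(a+c) = e from by omega]
  have h3 : (((a+c).choose a : ℕ) : ℝ) = (a+c)! / (a ! * c !) := by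
    rw [Nat.cast_choose ℝ (by omega : a ≤ a+c), show a+c-a = c from by omega]
  have h4 : (((a+b).choose a : ℕ) : ℝ) = (a+b)! / (a ! * b !) := by
    rw [Nat.cast_choose ℝ (by omega : a ≤ a+b), show a+b-a = b from by omega]
  have h5 : (((c+e-b).choose c : ℕ) : ℝ) = (c+e-b)! / (c ! * (e-b)!) := by
    rw [Nat.cast_choose ℝ (by omega : c ≤ c+e-b), show c+e-b-c = e-b from by omega]
  have h6 : (((a+c+e).choose (a+b) : ℕ) : ℝ) = (a+c+e)! / ((a+b)! * (c+e-b)!) := by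
    rw [Nat.cast_choose ℝ (by omega : a+b ≤ a+c+e), show a+c+e-(a+b) = c+e-b from by omega]
  rw [h1, h2, h3, h4, h5, h6]
  have f1 := Nat.factorial_pos a
  have f2 := Nat.factorial_pos b
  have f3 := Nat.factorial_pos c
  have f4 := Nat.factorial_pos e
  have f5 := Nat.factorial_pos (e-b)
  have f6 := Nat.factorial_pos (a+c)
  have f7 := Nat.factorial_pos (a+b)
  have f8 := Nat.factorial_pos (c+e-b)
  have f9 := Nat.factorial_pos (a+c+e)
  field_simp

lemma weight_sum {d s u : ℕ} (hu : 1 ≤ u) (hus : u ≤ s) (hsd : s ≤ d) :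
    ∑ b ∈ range (d-s+1), ((d-s).choose b : ℝ) / ((d-1).choose (u+b-1))
      = d / (s * ((s-1).choose (u-1))) := by
  obtain ⟨a, c, e, hu', hs', hd'⟩ : ∃ a c e, u = a+1 ∧ s = a+c+1 ∧ d = a+c+e+1 :=
    ⟨u-1, s-u, d-s, by omega, by omega, by omega⟩
  subst hu' hs' hd'
  have hds : a+c+e+1 - (a+c+1) = e := by omega
  have hd1 : a+c+e+1 - 1 = a+c+e := by omega
  have hs1 : a+c+1 - 1 = a+c := by omega
  have hu1 : a+1 - 1 = a := by omega
  rw [hds, hd1, hs1, hu1]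
  have hpos1 : (0:ℝ) < (a+c+e).choose (a+c) := by
    exact_mod_cast Nat.choose_pos (by omega)
  have hpos2 : (0:ℝ) < (a+c).choose a := by
    exact_mod_cast Nat.choose_pos (by omega)
  have step : ∀ b ∈ range (e+1), ((e.choose b : ℝ)) / ((a+c+e).choose (a+1+b-1))
      = (((a+b).choose a * ((e-b+c).choose c) : ℕ) : ℝ)
        / (((a+c+e).choose (a+c) : ℝ) * ((a+c).choose a)) := by
    intro b hb
    simp only [mem_range] at hb
    have hb' : b ≤ e := by omega
    have hub : a + 1 + b - 1 = a + b := by omega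
    have hcb : e - b + c = c + e - b := by omega
    have hchoose_pos : (0:ℝ) < (a+c+e).choose (a+b) := by
      exact_mod_cast Nat.choose_pos (by omega)
    rw [hub, hcb]
    rw [div_eq_div_iff (by positivity) (by positivity)]
    push_cast
    have := term_id (a := a) (c := c) (e := e) (b := b) hb'
    nlinarith [this]
  rw [Finset.sum_congr rfl step, ← Finset.sum_div]
  have hsum : ∑ b ∈ range (e+1), (((a+b).choose a * ((e-b+c).choose c) : ℕ) : ℝ)
      = (((a+c+e+1).choose (a+c+1) : ℕ) : ℝ) := by
    rw [← Nat.cast_sum]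
    norm_cast
    calc ∑ b ∈ range (e+1), (a+b).choose a * (e-b+c).choose c
        = ∑ b ∈ range (e+1), (b+a).choose a * (e-b+c).choose c := by
          apply Finset.sum_congr rfl; intro b _; rw [add_comm a b]
      _ = (e+a+c+1).choose (a+c+1) := hockey a c e
      _ = (a+c+e+1).choose (a+c+1) := by congr 1; omega
  rw [hsum]
  have hnum : ((a+c+e+1 : ℕ) : ℝ) * ((a+c+e).choose (a+c)) = ((a+c+e+1).choose (a+c+1) : ℝ) * ((a+c+1 : ℕ) : ℝ) := by
    exact_mod_cast Nat.add_one_mul_choose_eq (a+c+e) (a+c)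
  rw [div_eq_div_iff (by positivity)]
  · nlinarith [hnum, hpos1, hpos2, Nat.choose_pos (show a+c+1 ≤ a+c+e+1 by omega)]
  · have h1 : (0:ℝ) < ((a+c+1 : ℕ) : ℝ) := by exact_mod_cast Nat.succ_pos _
    positivity

end Comb

section Prob

variable {p : (∀ j, 𝒳 j) → 𝒴 → ℝ}

lemma margXY_pos (hpos : ∀ x y, 0 < p x y) (S : Finset (Fin d)) (x : ∀ j, 𝒳 j) (y : 𝒴) :
    0 < margXY p S x y := by
  unfold margXY
  apply Finset.sum_pos'
  · intro x' _
    split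
    · exact (hpos _ _).le
    · exact le_refl 0
  · exact ⟨x, Finset.mem_univ x, by simp [hpos x y]⟩

lemma margX_pos [Nonempty 𝒴] (hpos : ∀ x y, 0 < p x y) (S : Finset (Fin d)) (x : ∀ j, 𝒳 j) :
    0 < margX p S x :=
  Finset.sum_pos (fun y _ => margXY_pos hpos S x y) Finset.univ_nonempty

lemma pX_pos [Nonempty 𝒴] (hpos : ∀ x y, 0 < p x y) (x : ∀ j, 𝒳 j) : 0 < pX p x :=
  Finset.sum_pos (fun y _ => hpos x y) Finset.univ_nonempty

lemma margXY_univ (x : ∀ j, 𝒳 j) (y : 𝒴) : margXY p Finset.univ x y = p x y := by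
  unfold margXY
  rw [Finset.sum_eq_single x]
  · simp
  · intro x' _ hne
    rw [if_neg]
    intro h
    exact hne (funext fun j => h j (Finset.mem_univ j))
  · intro h
    exact absurd (Finset.mem_univ x) h

lemma margX_univ (x : ∀ j, 𝒳 j) : margX p Finset.univ x = pX p x := by
  unfold margX pX
  simp only [margXY_univ]

lemma condY_univ (x : ∀ j, 𝒳 j) (y : 𝒴) : condY p Finset.univ x y = p x y / pX p x := by
  unfold condY
  rw [margXY_univ, margX_univ]

lemma condY_univ_nonneg (hpos : ∀ x y, 0 < p x y) (x : ∀ j, 𝒳 j) (y : 𝒴) :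
    0 ≤ condY p Finset.univ x y := by
  rw [condY_univ]
  exact div_nonneg (hpos x y).le (Finset.sum_nonneg fun y _ => (hpos x y).le)

lemma sum_condY_univ [Nonempty 𝒴] (hpos : ∀ x y, 0 < p x y) (x : ∀ j, 𝒳 j) :
    ∑ y, condY p Finset.univ x y = 1 := by
  simp only [condY_univ]
  rw [← Finset.sum_div]
  exact div_self (pX_pos hpos x).ne'

lemma pX_mul_condY_univ (hpos : ∀ x y, 0 < p x y) [Nonempty 𝒴] (x : ∀ j, 𝒳 j) (y : 𝒴) :
    pX p x * condY p Finset.univ x y = p x y := by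
  rw [condY_univ, mul_div_cancel₀]
  exact (pX_pos hpos x).ne'

end Prob

section LogPart

variable {p : (∀ j, 𝒳 j) → 𝒴 → ℝ}

lemma margContrib_diff [Nonempty 𝒴] (hpos : ∀ x y, 0 < p x y) (x : ∀ j, 𝒳 j)
    (U A : Finset (Fin d)) (i : Fin d) :
    margContrib p x U i - margContrib p x A i
      = ∑ y, condY p Finset.univ x y *
          (Real.log ((margX p A x * margX p (U.erase i) x) /
              (margX p U x * margX p (A.erase i) x))
           - Real.log ((margXY p A x y * margXY p (U.erase i) x y) /
              (margXY p U x y * margXY p (A.erase i) x y))) := by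
  unfold margContrib impScore
  rw [← Finset.sum_sub_distrib, ← Finset.sum_sub_distrib, ← Finset.sum_sub_distrib]
  apply Finset.sum_congr rfl
  intro y _
  have hXY : ∀ T : Finset (Fin d), Real.log (condY p T x y)
      = Real.log (margXY p T x y) - Real.log (margX p T x) := fun T =>
    Real.log_div (margXY_pos hpos T x y).ne' (margX_pos hpos T x).ne'
  have lm : ∀ T T' : Finset (Fin d), Real.log (margX p T x * margX p T' x)
      = Real.log (margX p T x) + Real.log (margX p T' x) := fun T T' =>
    Real.log_mul (margX_pos hpos T x).ne' (margX_pos hpos T' x).ne'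
  have lmy : ∀ T T' : Finset (Fin d), Real.log (margXY p T x y * margXY p T' x y)
      = Real.log (margXY p T x y) + Real.log (margXY p T' x y) := fun T T' =>
    Real.log_mul (margXY_pos hpos T x y).ne' (margXY_pos hpos T' x y).ne'
  rw [hXY, hXY, hXY, hXY,
    Real.log_div (mul_pos (margX_pos hpos A x) (margX_pos hpos (U.erase i) x)).ne'
      (mul_pos (margX_pos hpos U x) (margX_pos hpos (A.erase i) x)).ne',
    Real.log_div (mul_pos (margXY_pos hpos A x y) (margXY_pos hpos (U.erase i) x y)).ne'
      (mul_pos (margXY_pos hpos U x y) (margXY_pos hpos (A.erase i) x y)).ne',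
    lm, lm, lmy, lmy]
  ring

end LogPart

section Bound

variable {p : (∀ j, 𝒳 j) → 𝒴 → ℝ}

lemma exp_diff_bound [Nonempty 𝒴] (hpos : ∀ x y, 0 < p x y)
    (i : Fin d) (S U A : Finset (Fin d)) (hUS : U ⊆ S) (hiU : i ∈ U) (hA : A ∩ S = U) :
    ∑ x : ∀ j, 𝒳 j, pX p x * |margContrib p x U i - margContrib p x A i|
      ≤ IaXY p {i} (A \ S) (U.erase i) + IaX p {i} (A \ S) (U.erase i) := by
  have hmemA : ∀ j, j ∈ A ↔ (j ∈ A ∧ j ∈ S) ∨ (j ∈ A ∧ j ∉ S) := by tauto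
  have hUA : ∀ j, j ∈ U ↔ j ∈ A ∧ j ∈ S := by
    intro j; rw [← hA]; simp [Finset.mem_inter]
  have hUn1 : {i} ∪ (A \ S) ∪ U.erase i = A := by
    ext j
    simp only [Finset.mem_union, Finset.mem_singleton, Finset.mem_sdiff, Finset.mem_erase]
    constructor
    · rintro ((rfl | ⟨hj, _⟩) | ⟨_, hj⟩)
      · exact ((hUA _).mp hiU).1
      · exact hj
      · exact ((hUA j).mp hj).1
    · intro hj
      by_cases hjS : j ∈ S
      · by_cases hji : j = i
        · exact Or.inl (Or.inl hji)
        · exact Or.inr ⟨hji, (hUA j).mpr ⟨hj, hjS⟩⟩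
      · exact Or.inl (Or.inr ⟨hj, hjS⟩)
  have hUn2 : {i} ∪ U.erase i = U := by
    ext j
    simp only [Finset.mem_union, Finset.mem_singleton, Finset.mem_erase]
    constructor
    · rintro (rfl | ⟨_, hj⟩)
      · exact hiU
      · exact hj
    · intro hj
      by_cases hji : j = i
      · exact Or.inl hji
      · exact Or.inr ⟨hji, hj⟩
  have hUn3 : (A \ S) ∪ U.erase i = A.erase i := by
    ext j
    simp only [Finset.mem_union, Finset.mem_sdiff, Finset.mem_erase]
    constructor
    · rintro (⟨hj, hjS⟩ | ⟨hji, hj⟩)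
      · refine ⟨fun h => hjS (((hUA j).mp (h ▸ hiU)).2), hj⟩
      · exact ⟨hji, ((hUA j).mp hj).1⟩
    · rintro ⟨hji, hj⟩
      by_cases hjS : j ∈ S
      · exact Or.inr ⟨hji, (hUA j).mpr ⟨hj, hjS⟩⟩
      · exact Or.inl ⟨hj, hjS⟩
  unfold IaXY IaX
  rw [hUn1, hUn2, hUn3, ← Finset.sum_add_distrib]
  apply Finset.sum_le_sum
  intro x _
  set LX := Real.log ((margX p A x * margX p (U.erase i) x) /
      (margX p U x * margX p (A.erase i) x)) with hLX
  set LXY := fun y => Real.log ((margXY p A x y * margXY p (U.erase i) x y) /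
      (margXY p U x y * margXY p (A.erase i) x y)) with hLXY
  rw [margContrib_diff hpos x U A i]
  have hb : |∑ y, condY p Finset.univ x y * (LX - LXY y)|
      ≤ ∑ y, condY p Finset.univ x y * (|LXY y| + |LX|) := by
    refine (Finset.abs_sum_le_sum_abs _ _).trans (Finset.sum_le_sum fun y _ => ?_)
    rw [abs_mul, abs_of_nonneg (condY_univ_nonneg hpos x y)]
    apply mul_le_mul_of_nonneg_left _ (condY_univ_nonneg hpos x y)
    calc |LX - LXY y| ≤ |LX| + |LXY y| := abs_sub _ _
      _ = |LXY y| + |LX| := add_comm _ _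
  calc pX p x * |∑ y, condY p Finset.univ x y * (LX - LXY y)|
      ≤ pX p x * ∑ y, condY p Finset.univ x y * (|LXY y| + |LX|) :=
        mul_le_mul_of_nonneg_left hb (le_of_lt (pX_pos hpos x))
    _ = ∑ y, p x y * |LXY y| + pX p x * |LX| := by
        rw [Finset.mul_sum]
        have : ∀ y ∈ Finset.univ, pX p x * (condY p Finset.univ x y * (|LXY y| + |LX|))
            = p x y * |LXY y| + p x y * |LX| := by
          intro y _
          rw [← mul_assoc, pX_mul_condY_univ hpos x y, mul_add]
        rw [Finset.sum_congr rfl this, Finset.sum_add_distrib]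
        congr 1
        rw [← Finset.sum_mul]
        unfold pX
        rfl
end Bound

lemma weight_finset {d : ℕ} (i : Fin d) (S U : Finset (Fin d)) (hUS : U ⊆ S) (hiU : i ∈ U) :
    ∑ A : Finset (Fin d), (if A ∩ S = U then (1:ℝ)/(((d-1).choose (A.card - 1)) : ℝ) else 0)
      = (d : ℝ) / ((S.card : ℝ) * (((S.card - 1).choose (U.card - 1)) : ℝ)) := by
  classical
  rw [← Finset.sum_filter]
  have step1 : ∑ A ∈ Finset.univ.filter (fun A : Finset (Fin d) => A ∩ S = U),
      (1:ℝ)/(((d-1).choose (A.card - 1)) : ℝ)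
      = ∑ B ∈ (Finset.univ \ S).powerset, (1:ℝ)/(((d-1).choose (U.card + B.card - 1)) : ℝ) := by
    apply Finset.sum_nbij' (fun A => A \ S) (fun B => U ∪ B)
    · intro A hA
      simp only [Finset.mem_filter] at hA
      simp only [Finset.mem_powerset]
      intro j hj
      simp only [Finset.mem_sdiff] at hj ⊢
      exact ⟨Finset.mem_univ j, hj.2⟩
    · intro B hB
      simp only [Finset.mem_powerset] at hB
      simp only [Finset.mem_filter, Finset.mem_univ, true_and]
      ext j
      simp only [Finset.mem_inter, Finset.mem_union]
      constructor
      · rintro ⟨hj1 | hj2, hjS⟩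
        · exact hj1
        · exact absurd hjS (Finset.mem_sdiff.mp (hB hj2)).2
      · intro hj
        exact ⟨Or.inl hj, hUS hj⟩
    · intro A hA
      simp only [Finset.mem_filter] at hA
      rw [← hA.2]
      ext j
      simp only [Finset.mem_union, Finset.mem_inter, Finset.mem_sdiff]
      tauto
    · intro B hB
      simp only [Finset.mem_powerset] at hB
      ext j
      simp only [Finset.mem_sdiff, Finset.mem_union]
      constructor
      · rintro ⟨hj1 | hj2, hjS⟩
        · exact absurd (hUS hj1) hjS
        · exact hj2
      · intro hj
        exact ⟨Or.inr hj, (Finset.mem_sdiff.mp (hB hj)).2⟩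
    · intro A hA
      simp only [Finset.mem_filter] at hA
      congr 2
      have hdisj : Disjoint U (A \ S) :=
        Finset.disjoint_left.mpr fun j hj hj' => (Finset.mem_sdiff.mp hj').2 (hUS hj)
      have hsplit : A = U ∪ (A \ S) := by
        rw [← hA.2]
        ext j
        simp only [Finset.mem_union, Finset.mem_inter, Finset.mem_sdiff]
        tauto
      conv_lhs => rw [hsplit]
      rw [Finset.card_union_of_disjoint hdisj]
  rw [step1, Finset.sum_powerset]
  have hcard : (Finset.univ \ S : Finset (Fin d)).card = d - S.card := by
    rw [Finset.card_sdiff_of_subset (Finset.subset_univ S), Finset.card_univ, Fintype.card_fin]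
  have step2 : ∀ b ∈ Finset.range ((Finset.univ \ S : Finset (Fin d)).card + 1),
      ∑ B ∈ Finset.powersetCard b (Finset.univ \ S : Finset (Fin d)),
        (1:ℝ)/(((d-1).choose (U.card + B.card - 1)) : ℝ)
      = ((d - S.card).choose b : ℝ) / (((d-1).choose (U.card + b - 1)) : ℝ) := by
    intro b _
    have : ∀ B ∈ Finset.powersetCard b (Finset.univ \ S : Finset (Fin d)),
        (1:ℝ)/(((d-1).choose (U.card + B.card - 1)) : ℝ)
        = (1:ℝ)/(((d-1).choose (U.card + b - 1)) : ℝ) := by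
      intro B hB
      rw [(Finset.mem_powersetCard.mp hB).2]
    rw [Finset.sum_congr rfl this, Finset.sum_const, Finset.card_powersetCard, hcard,
      nsmul_eq_mul]
    rw [mul_one_div]
  rw [Finset.sum_congr rfl step2, hcard]
  have h1 : 1 ≤ U.card := Finset.card_pos.mpr ⟨i, hiU⟩
  have h2 : U.card ≤ S.card := Finset.card_le_card hUS
  have h3 : S.card ≤ d := by
    have := Finset.card_le_card (Finset.subset_univ S)
    rwa [Finset.card_univ, Fintype.card_fin] at this
  exact weight_sum h1 h2 h3

lemma ite_sum_comm {α : Type*} (s : Finset α) (c : Prop) [Decidable c] (f : α → ℝ) :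
    (if c then ∑ a ∈ s, f a else 0) = ∑ a ∈ s, (if c then f a else 0) := by
  split_ifs <;> simp

section Decomp

variable {p : (∀ j, 𝒳 j) → 𝒴 → ℝ}

lemma decomp (x : ∀ j, 𝒳 j) (i : Fin d) (S : Finset (Fin d)) (hiS : i ∈ S) :
    shapleyRes p x S i - shapley p x i
      = (1/(d:ℝ)) * ∑ U ∈ S.powerset, (if i ∈ U then
          ∑ A : Finset (Fin d), (if A ∩ S = U then
            (margContrib p x U i - margContrib p x A i) / (((d-1).choose (A.card - 1)) : ℝ)
          else 0) else 0) := by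
  classical
  have hd0 : 0 < d := i.pos
  have stepA : shapley p x i
      = (1/(d:ℝ)) * ∑ U ∈ S.powerset, (if i ∈ U then
          ∑ A : Finset (Fin d), (if A ∩ S = U then
            margContrib p x A i / (((d-1).choose (A.card - 1)) : ℝ) else 0) else 0) := by
    unfold shapley
    congr 1
    rw [← Finset.sum_fiberwise_of_maps_to
      (g := fun A : Finset (Fin d) => A ∩ S)
      (fun A _ => Finset.mem_powerset.mpr Finset.inter_subset_right)
      (fun A => if i ∈ A then margContrib p x A i / (((d-1).choose (A.card - 1)) : ℝ) else 0)]
    apply Finset.sum_congr rfl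
    intro U _
    have hiff : ∀ A ∈ Finset.univ.filter (fun A : Finset (Fin d) => A ∩ S = U),
        (i ∈ A ↔ i ∈ U) := by
      intro A hA
      simp only [Finset.mem_filter] at hA
      rw [← hA.2]
      simp only [Finset.mem_inter]
      exact ⟨fun h => ⟨h, hiS⟩, fun h => h.1⟩
    by_cases h : i ∈ U
    · rw [if_pos h, Finset.sum_filter]
      apply Finset.sum_congr rfl
      intro A _
      by_cases hc : A ∩ S = U
      · rw [if_pos hc, if_pos hc, if_pos ((hiff A (by simp [hc])).mpr h)]
      · rw [if_neg hc, if_neg hc]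
    · rw [if_neg h]
      apply Finset.sum_eq_zero
      intro A hA
      rw [if_neg (fun hc => h ((hiff A hA).mp hc))]
  have stepB : shapleyRes p x S i
      = (1/(d:ℝ)) * ∑ U ∈ S.powerset, (if i ∈ U then
          ∑ A : Finset (Fin d), (if A ∩ S = U then
            margContrib p x U i / (((d-1).choose (A.card - 1)) : ℝ) else 0) else 0) := by
    unfold shapleyRes
    rw [Finset.mul_sum, Finset.mul_sum]
    apply Finset.sum_congr rfl
    intro U hU
    by_cases h : i ∈ U
    · rw [if_pos h, if_pos h]
      have hw := weight_finset i S U (Finset.mem_powerset.mp hU) h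
      have hrw : ∀ A : Finset (Fin d),
          (if A ∩ S = U then margContrib p x U i / (((d-1).choose (A.card - 1)) : ℝ) else 0)
          = margContrib p x U i * (if A ∩ S = U then (1:ℝ)/(((d-1).choose (A.card - 1)) : ℝ) else 0) := by
        intro A
        split_ifs
        · rw [mul_one_div]
        · rw [mul_zero]
      rw [Finset.sum_congr rfl (fun A _ => hrw A), ← Finset.mul_sum, hw]
      have hdne : ((d:ℝ)) ≠ 0 := Nat.cast_ne_zero.mpr hd0.ne'
      field_simp
    · rw [if_neg h, if_neg h, mul_zero, mul_zero]
  rw [stepA, stepB, ← mul_sub, ← Finset.sum_sub_distrib]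
  congr 1
  apply Finset.sum_congr rfl
  intro U _
  by_cases h : i ∈ U
  · rw [if_pos h, if_pos h, if_pos h, ← Finset.sum_sub_distrib]
    apply Finset.sum_congr rfl
    intro A _
    split_ifs
    · rw [div_sub_div_same]
    · rw [sub_zero]
  · rw [if_neg h, if_neg h, if_neg h, sub_zero]

end Decomp

/-- The key intermediate bound in the proof of Theorem 1: the expected absolute error
between the restricted Shapley estimate and the Shapley value is bounded by the
Shapley-weighted sum of absolute conditional mutual informations. -/
theorem restricted_shapley_error_le_Ia_sum (p : (∀ j, 𝒳 j) → 𝒴 → ℝ)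
    (hpos : ∀ x y, 0 < p x y)
    (hsum : ∑ x : ∀ j, 𝒳 j, ∑ y, p x y = 1)
    (i : Fin d) (S : Finset (Fin d)) (hiS : i ∈ S)
    (ε : ℝ) (hε : 0 ≤ ε)
    (hIa : ∀ U ⊆ S.erase i, ∀ V ⊆ Finset.univ \ S,
      IaXY p {i} V U ≤ ε ∧ IaX p {i} V U ≤ ε) :
    ∑ x : ∀ j, 𝒳 j, pX p x * |shapleyRes p x S i - shapley p x i|
      ≤ (1 / (d : ℝ)) * ∑ U ∈ S.powerset,
          (if i ∈ U then
            ∑ A : Finset (Fin d),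
              (if A ∩ S = U then
                (IaXY p {i} (A \ S) (U.erase i) + IaX p {i} (A \ S) (U.erase i)) /
                  ((d - 1).choose (A.card - 1) : ℝ)
              else 0)
          else 0) := by
  classical
  have hY : Nonempty 𝒴 := by
    by_contra h
    rw [not_nonempty_iff] at h
    simp only [Finset.univ_eq_empty, Finset.sum_empty, Finset.sum_const_zero] at hsum
    exact one_ne_zero hsum.symm
  have hd0 : 0 < d := i.pos
  have hpX : ∀ x : ∀ j, 𝒳 j, 0 ≤ pX p x := fun x => (pX_pos hpos x).le
  have hCnn : ∀ A : Finset (Fin d), (0:ℝ) ≤ ((d - 1).choose (A.card - 1) : ℝ) :=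
    fun A => Nat.cast_nonneg _
  have key : ∀ x : ∀ j, 𝒳 j, pX p x * |shapleyRes p x S i - shapley p x i|
      ≤ (1/(d:ℝ)) * ∑ U ∈ S.powerset, (if i ∈ U then
          ∑ A : Finset (Fin d), (if A ∩ S = U then
            pX p x * |margContrib p x U i - margContrib p x A i| /
              ((d - 1).choose (A.card - 1) : ℝ)
          else 0) else 0) := by
    intro x
    rw [decomp x i S hiS, abs_mul, abs_of_nonneg (by positivity : (0:ℝ) ≤ 1/(d:ℝ)),
      ← mul_assoc, mul_comm (pX p x) (1/(d:ℝ)), mul_assoc]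
    apply mul_le_mul_of_nonneg_left _ (by positivity : (0:ℝ) ≤ 1/(d:ℝ))
    have habs : |∑ U ∈ S.powerset, (if i ∈ U then
          ∑ A : Finset (Fin d), (if A ∩ S = U then
            (margContrib p x U i - margContrib p x A i) / ((d - 1).choose (A.card - 1) : ℝ)
          else 0) else 0)|
        ≤ ∑ U ∈ S.powerset, (if i ∈ U then
          ∑ A : Finset (Fin d), (if A ∩ S = U then
            |margContrib p x U i - margContrib p x A i| / ((d - 1).choose (A.card - 1) : ℝ)
          else 0) else 0) := by
      refine (Finset.abs_sum_le_sum_abs _ _).trans (Finset.sum_le_sum fun U _ => ?_)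
      split_ifs with h
      · refine (Finset.abs_sum_le_sum_abs _ _).trans (Finset.sum_le_sum fun A _ => ?_)
        split_ifs with h2
        · rw [abs_div, abs_of_nonneg (hCnn A)]
        · simp
      · simp
    calc pX p x * |∑ U ∈ S.powerset, (if i ∈ U then
          ∑ A : Finset (Fin d), (if A ∩ S = U then
            (margContrib p x U i - margContrib p x A i) / ((d - 1).choose (A.card - 1) : ℝ)
          else 0) else 0)|
        ≤ pX p x * ∑ U ∈ S.powerset, (if i ∈ U then
          ∑ A : Finset (Fin d), (if A ∩ S = U then
            |margContrib p x U i - margContrib p x A i| / ((d - 1).choose (A.card - 1) : ℝ)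
          else 0) else 0) := mul_le_mul_of_nonneg_left habs (hpX x)
      _ = _ := by
          rw [Finset.mul_sum]
          apply Finset.sum_congr rfl
          intro U _
          split_ifs with h
          · rw [Finset.mul_sum]
            apply Finset.sum_congr rfl
            intro A _
            split_ifs with h2
            · rw [mul_div_assoc]
            · rw [mul_zero]
          · rw [mul_zero]
  calc ∑ x : ∀ j, 𝒳 j, pX p x * |shapleyRes p x S i - shapley p x i|
      ≤ ∑ x : ∀ j, 𝒳 j, (1/(d:ℝ)) * ∑ U ∈ S.powerset, (if i ∈ U then
          ∑ A : Finset (Fin d), (if A ∩ S = U then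
            pX p x * |margContrib p x U i - margContrib p x A i| /
              ((d - 1).choose (A.card - 1) : ℝ)
          else 0) else 0) := Finset.sum_le_sum fun x _ => key x
    _ = (1/(d:ℝ)) * ∑ U ∈ S.powerset, (if i ∈ U then
          ∑ A : Finset (Fin d), (if A ∩ S = U then
            (∑ x : ∀ j, 𝒳 j, pX p x * |margContrib p x U i - margContrib p x A i|) /
              ((d - 1).choose (A.card - 1) : ℝ)
          else 0) else 0) := by
        rw [← Finset.mul_sum]
        congr 1
        rw [Finset.sum_comm]
        apply Finset.sum_congr rfl
        intro U _
        rw [← ite_sum_comm]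
        split_ifs with h
        · rw [Finset.sum_comm]
          apply Finset.sum_congr rfl
          intro A _
          rw [← ite_sum_comm]
          split_ifs with h2
          · rw [← Finset.sum_div]
          · rfl
        · rfl
    _ ≤ _ := by
        apply mul_le_mul_of_nonneg_left _ (by positivity : (0:ℝ) ≤ 1/(d:ℝ))
        apply Finset.sum_le_sum
        intro U hU
        split_ifs with h
        · apply Finset.sum_le_sum
          intro A _
          split_ifs with h2
          · have hiA : i ∈ A := by
              have hh := h
              rw [← h2] at hh
              exact (Finset.mem_inter.mp hh).1
            have hCpos : (0:ℝ) < ((d - 1).choose (A.card - 1) : ℝ) := by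
              have hAd : A.card ≤ d := by
                have := Finset.card_le_card (Finset.subset_univ A)
                rwa [Finset.card_univ, Fintype.card_fin] at this
              have : A.card - 1 ≤ d - 1 := by omega
              exact_mod_cast Nat.choose_pos this
            apply div_le_div_of_nonneg_right ?_ hCpos.le
            exact exp_diff_bound hpos i S U A (Finset.mem_powerset.mp hU) h h2
          · exact le_refl 0
        · exact le_refl 0
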